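/- Let n ≥ 2 and let d = (d_1, …, d_n) be integers with 2 ≤ d_1 ≤ ⋯ ≤ d_n and d_n − 1 ≤ ∑_{i=1}^{n−1}(d_i − 1). Then there exists a real global section f of E whose zero set Z(f) ⊆ ∏_{i=1}^n ℙ(ℂ^{d_i}) is finite with exactly c(d) elements, every one of which is a real point. -/
import Mathlib


/-- `cCoeff d` is the coefficient of the monomial `h₁^(d₁-1) ⋯ hₙ^(dₙ-1)` in the
polynomial `∏ i, (∑_{j ≠ i} h_j)^(dᵢ-1)` in `ℤ[h₁, …, hₙ]`. -/
noncomputable def cCoeff {n : ℕ} (d : Fin n → ℕ) : ℤ :=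
  MvPolynomial.coeff (Finsupp.equivFunOnFinite.symm fun i => d i - 1)
    (∏ i : Fin n,
      (∑ j ∈ Finset.univ.erase i, (MvPolynomial.X j : MvPolynomial (Fin n) ℤ)) ^ (d i - 1))

/-- A global section of `E = ⊕ᵢ O(𝟙ᵢ)^{⊕(dᵢ-1)}` is a tuple of multilinear forms of
multidegree `𝟙ᵢ`, each given by its coefficient tensor indexed by the multi-indices
omitting position `i`. -/
def Section (n : ℕ) (d : Fin n → ℕ) : Type :=
  ∀ i : Fin n, Fin (d i - 1) → ((∀ m : {m : Fin n // m ≠ i}, Fin (d m.1)) → ℂ)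

/-- Evaluation of a multilinear form of multidegree `𝟙ᵢ` (given by its coefficients `c`)
at the groups of variables `π⁽ᵏ⁾`, `k ≠ i`. -/
noncomputable def evalForm {n : ℕ} (d : Fin n → ℕ) (i : Fin n)
    (c : (∀ m : {m : Fin n // m ≠ i}, Fin (d m.1)) → ℂ)
    (π : ∀ m : {m : Fin n // m ≠ i}, Fin (d m.1) → ℂ) : ℂ :=
  ∑ j : ∀ m : {m : Fin n // m ≠ i}, Fin (d m.1),
    c j * ∏ m : {m : Fin n // m ≠ i}, π m (j m)

/-- The zero set `Z(f)` of a global section `f` of `E`, as a subset of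
`∏ᵢ ℙ(ℂ^{dᵢ})`. -/
def zeroSet {n : ℕ} (d : Fin n → ℕ) (f : Section n d) :
    Set (∀ i : Fin n, Projectivization ℂ (Fin (d i) → ℂ)) :=
  {P | ∃ (π : ∀ k, Fin (d k) → ℂ) (h : ∀ k, π k ≠ 0),
    (∀ k, P k = Projectivization.mk ℂ (π k) (h k)) ∧
    ∀ (i : Fin n) (j : Fin (d i - 1)),
      evalForm d i (f i j) (fun m => π m.1) = 0}

/-- A point of `∏ᵢ ℙ(ℂ^{dᵢ})` is real if it is the class of a tuple of vectors with
real entries. -/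
def IsRealPoint {n : ℕ} (d : Fin n → ℕ)
    (P : ∀ i : Fin n, Projectivization ℂ (Fin (d i) → ℂ)) : Prop :=
  ∃ (π : ∀ k, Fin (d k) → ℂ) (h : ∀ k, π k ≠ 0),
    (∀ k, P k = Projectivization.mk ℂ (π k) (h k)) ∧ ∀ k s, (π k s).im = 0

/-- A section is real if all of its coefficients are real. -/
def IsRealSection {n : ℕ} (d : Fin n → ℕ) (f : Section n d) : Prop :=
  ∀ i j c, (f i j c).im = 0

open Finset MvPolynomial

lemma prodX_eq_monomial {σ α : Type*} [CommSemiring α] [DecidableEq σ] {β : Type*}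
    (s : Finset β) (φ : β → σ) :
    ∏ p ∈ s, (X (φ p) : MvPolynomial σ α) =
      monomial (∑ p ∈ s, Finsupp.single (φ p) 1) 1 := by
  induction s using Finset.cons_induction with
  | empty => simp [monomial_zero']
  | cons a s ha ih =>
      rw [Finset.prod_cons, Finset.sum_cons, ih, X, monomial_mul, one_mul]

lemma cCoeff_eq_card (n : ℕ) (d : Fin n → ℕ) :
    cCoeff d = ((Fintype.piFinset (fun p : Σ i : Fin n, Fin (d i - 1) =>
        Finset.univ.erase p.1)).filter
      (fun φ => ∀ k, (Finset.univ.filter (fun p => φ p = k)).card = d k - 1)).card := by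
  classical
  have h1 : (∏ i : Fin n,
      (∑ j ∈ Finset.univ.erase i, (X j : MvPolynomial (Fin n) ℤ)) ^ (d i - 1)) =
      ∏ p : Σ i : Fin n, Fin (d i - 1),
        (∑ j ∈ Finset.univ.erase p.1, (X j : MvPolynomial (Fin n) ℤ)) := by
    rw [← Finset.univ_sigma_univ, Finset.prod_sigma]
    simp [Finset.prod_const]
  rw [cCoeff, h1, Finset.prod_univ_sum]
  simp_rw [prodX_eq_monomial]
  rw [MvPolynomial.coeff_sum]
  simp only [MvPolynomial.coeff_monomial]
  rw [Finset.sum_boole]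
  norm_cast
  apply congrArg
  apply Finset.filter_congr
  intro φ _
  constructor
  · intro h k
    have := congrFun (congrArg (↑·) h) k
    simpa [Finsupp.single_apply, Finset.sum_boole] using this
  · intro h
    ext k
    simp [Finsupp.single_apply, Finset.sum_boole, h k]

noncomputable def lin {D : ℕ} (u : ℂ) (v : Fin D → ℂ) : ℂ := ∑ s : Fin D, u ^ (s : ℕ) * v s

noncomputable def pol {D : ℕ} (v : Fin D → ℂ) : Polynomial ℂ :=
  ∑ s : Fin D, Polynomial.C (v s) * Polynomial.X ^ (s : ℕ)

lemma lin_eq_eval {D : ℕ} (u : ℂ) (v : Fin D → ℂ) : lin u v = (pol v).eval u := by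
  rw [pol, Polynomial.eval_finset_sum]
  exact Finset.sum_congr rfl fun s _ => by rw [Polynomial.eval_mul, Polynomial.eval_C, Polynomial.eval_pow, Polynomial.eval_X]; ring

lemma lin_smul {D : ℕ} (u c : ℂ) (v : Fin D → ℂ) : lin u (c • v) = c * lin u v := by
  simp only [lin, Finset.mul_sum, Pi.smul_apply, smul_eq_mul]
  exact Finset.sum_congr rfl fun s _ => by ring

lemma pol_coeff {D : ℕ} (v : Fin D → ℂ) (m : ℕ) :
    (pol v).coeff m = if h : m < D then v ⟨m, h⟩ else 0 := by
  rw [pol, Polynomial.finset_sum_coeff]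
  simp only [Polynomial.coeff_C_mul, Polynomial.coeff_X_pow, mul_ite, mul_one, mul_zero]
  split
  · next h =>
      rw [Finset.sum_eq_single (⟨m, h⟩ : Fin D)]
      · simp
      · intro b _ hb
        rw [if_neg]
        intro hmb
        exact hb (by simp [Fin.ext_iff, hmb.symm])
      · simp
  · next h =>
      apply Finset.sum_eq_zero; intro s _
      rw [if_neg]; omega

lemma pol_natDegree_le {D : ℕ} (v : Fin D → ℂ) : (pol v).natDegree ≤ D - 1 := by
  apply Polynomial.natDegree_sum_le_of_forall_le
  intro s _
  apply le_trans (Polynomial.natDegree_C_mul_le _ _)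
  simp only [Polynomial.natDegree_X_pow]
  omega

lemma pol_ne_zero {D : ℕ} {v : Fin D → ℂ} (hv : v ≠ 0) : pol v ≠ 0 := by
  obtain ⟨s, hs⟩ := Function.ne_iff.1 hv
  intro h
  apply hs
  have := pol_coeff v (s : ℕ)
  rw [h, Polynomial.coeff_zero] at this
  rw [dif_pos s.2] at this
  simpa using this.symm

lemma card_vanish_le {D : ℕ} {v : Fin D → ℂ} (hv : v ≠ 0) (S : Finset ℂ)
    (hS : ∀ u ∈ S, lin u v = 0) : S.card ≤ D - 1 := by
  refine le_trans (Polynomial.card_le_degree_of_subset_roots (p := pol v) ?_) (pol_natDegree_le v)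
  intro u hu
  rw [Polynomial.mem_roots (pol_ne_zero hv)]
  have := hS u (by simpa using hu)
  rwa [lin_eq_eval] at this

lemma proportional {D : ℕ} (hD : 0 < D) {v : Fin D → ℂ} (hv : v ≠ 0) (S : Finset ℂ)
    (hS : S.card = D - 1) (hroots : ∀ u ∈ S, lin u v = 0) :
    ∃ c : ℂ, c ≠ 0 ∧ ∀ s : Fin D,
      v s = c * (∏ w ∈ S, (Polynomial.X - Polynomial.C w)).coeff (s : ℕ) := by
  set Q : Polynomial ℂ := ∏ w ∈ S, (Polynomial.X - Polynomial.C w) with hQ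
  have hQm : Q.Monic := Polynomial.monic_prod_of_monic _ _ fun w _ => Polynomial.monic_X_sub_C w
  have hQd : Q.natDegree = D - 1 := by
    rw [hQ, Polynomial.natDegree_prod _ _ (fun w _ => Polynomial.X_sub_C_ne_zero w)]
    simp [hS]
  have hQeval : ∀ w ∈ S, Q.eval w = 0 := by
    intro w hw
    rw [hQ, Polynomial.eval_prod]
    exact Finset.prod_eq_zero hw (by simp)
  set c : ℂ := v ⟨D - 1, by omega⟩ with hc
  set r : Polynomial ℂ := pol v - Polynomial.C c * Q with hr
  have hrc : r.coeff (D - 1) = 0 := by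
    rw [hr, Polynomial.coeff_sub, Polynomial.coeff_C_mul, pol_coeff, dif_pos (by omega : D - 1 < D)]
    rw [show Q.coeff (D-1) = 1 from hQd ▸ hQm.coeff_natDegree]
    simp [hc]
  have hrd : r.natDegree ≤ D - 1 := by
    apply le_trans (Polynomial.natDegree_sub_le _ _)
    simp only [max_le_iff]
    exact ⟨pol_natDegree_le v, le_trans (Polynomial.natDegree_C_mul_le _ _) hQd.le⟩
  have hr0 : r = 0 := by
    by_contra hr0
    have hlt : r.natDegree < D - 1 := by
      rcases lt_or_eq_of_le hrd with h | h
      · exact h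
      · exfalso
        apply Polynomial.leadingCoeff_ne_zero.2 hr0
        rw [Polynomial.leadingCoeff, h, hrc]
    have hcard : S.card ≤ r.natDegree := by
      apply Polynomial.card_le_degree_of_subset_roots
      intro u hu
      rw [Polynomial.mem_roots hr0]
      have hu' : u ∈ S := by simpa using hu
      have := hroots u hu'
      rw [lin_eq_eval] at this
      simp [Polynomial.IsRoot, hr, this, hQeval u hu']
    omega
  have hpol : pol v = Polynomial.C c * Q := by
    have := sub_eq_zero.1 hr0
    linear_combination this
  refine ⟨c, ?_, ?_⟩
  · intro h
    apply pol_ne_zero hv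
    rw [hpol, h]; simp
  · intro s
    have := congrArg (fun p => Polynomial.coeff p (s : ℕ)) hpol
    simpa [pol_coeff, dif_pos s.2] using this

abbrev Pairs (n : ℕ) (d : Fin n → ℕ) := Σ i : Fin n, Fin (d i - 1)

noncomputable def tR {n : ℕ} {d : Fin n → ℕ} (p : Pairs n d) : ℝ :=
  ((Fintype.equivFin (Pairs n d)) p : ℕ)

lemma tR_inj {n : ℕ} {d : Fin n → ℕ} : Function.Injective (tR (n := n) (d := d)) := by
  intro p q h
  apply (Fintype.equivFin (Pairs n d)).injective
  apply Fin.val_injective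
  simp only [tR] at h
  exact_mod_cast h

noncomputable def Fsec (n : ℕ) (d : Fin n → ℕ) : Section n d := fun i j c =>
  (((∏ m : {m : Fin n // m ≠ i}, (tR (⟨i, j⟩ : Pairs n d)) ^ ((c m : ℕ))) : ℝ) : ℂ)

lemma eval_Fsec {n : ℕ} (d : Fin n → ℕ) (i : Fin n) (j : Fin (d i - 1))
    (π : ∀ m : {m : Fin n // m ≠ i}, Fin (d m.1) → ℂ) :
    evalForm d i (Fsec n d i j) π =
      ∏ m : {m : Fin n // m ≠ i}, lin ((tR (⟨i, j⟩ : Pairs n d) : ℂ)) (π m) := by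
  have key : ∀ c : (∀ m : {m : Fin n // m ≠ i}, Fin (d m.1)),
      Fsec n d i j c * ∏ m, π m (c m)
      = ∏ m : {m : Fin n // m ≠ i},
          ((tR (⟨i, j⟩ : Pairs n d) : ℂ) ^ ((c m : ℕ)) * π m (c m)) := by
    intro c
    rw [Fsec]
    push_cast
    rw [Finset.prod_mul_distrib]
  rw [evalForm]
  calc (∑ c : (∀ m : {m : Fin n // m ≠ i}, Fin (d m.1)), Fsec n d i j c * ∏ m, π m (c m))
      = ∑ c ∈ Fintype.piFinset
          (fun m : {m : Fin n // m ≠ i} => (Finset.univ : Finset (Fin (d m.1)))),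
          ∏ m : {m : Fin n // m ≠ i},
            ((tR (⟨i, j⟩ : Pairs n d) : ℂ) ^ ((c m : ℕ)) * π m (c m)) := by
        rw [Fintype.piFinset_univ]
        exact Finset.sum_congr rfl fun c _ => key c
    _ = ∏ m : {m : Fin n // m ≠ i},
          ∑ s : Fin (d m.1), (tR (⟨i, j⟩ : Pairs n d) : ℂ) ^ ((s : ℕ)) * π m s :=
        by rw [Finset.prod_univ_sum]
    _ = _ := Finset.prod_congr rfl fun m _ => by rw [lin]

noncomputable def qpolR {n : ℕ} {d : Fin n → ℕ} (F : Finset (Pairs n d)) : Polynomial ℝ :=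
  ∏ p ∈ F, (Polynomial.X - Polynomial.C (tR p))

noncomputable def qvec {n : ℕ} {d : Fin n → ℕ} (k : Fin n) (F : Finset (Pairs n d)) :
    Fin (d k) → ℂ :=
  fun s => ((qpolR F).coeff (s : ℕ) : ℂ)

lemma qpolR_monic {n : ℕ} {d : Fin n → ℕ} (F : Finset (Pairs n d)) : (qpolR F).Monic :=
  Polynomial.monic_prod_of_monic _ _ fun w _ => Polynomial.monic_X_sub_C _

lemma qpolR_natDegree {n : ℕ} {d : Fin n → ℕ} (F : Finset (Pairs n d)) :
    (qpolR F).natDegree = F.card := by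
  rw [qpolR, Polynomial.natDegree_prod _ _ (fun w _ => Polynomial.X_sub_C_ne_zero _)]
  simp

lemma qvec_ne_zero {n : ℕ} {d : Fin n → ℕ} {k : Fin n} {F : Finset (Pairs n d)}
    (h : F.card < d k) : qvec k F ≠ 0 := by
  intro h0
  have := congrFun h0 ⟨F.card, h⟩
  rw [qvec] at this
  simp only [Pi.zero_apply] at this
  have h2 : (qpolR F).coeff F.card = 1 := by
    have h3 := (qpolR_monic F).coeff_natDegree
    rwa [qpolR_natDegree] at h3
  rw [h2] at this
  simpa using this

lemma pol_qvec {n : ℕ} {d : Fin n → ℕ} {k : Fin n} {F : Finset (Pairs n d)}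
    (h : F.card < d k) :
    pol (qvec k F) = ∏ p ∈ F, (Polynomial.X - Polynomial.C ((tR p : ℝ) : ℂ)) := by
  have hmap : (∏ p ∈ F, (Polynomial.X - Polynomial.C ((tR p : ℝ) : ℂ)))
      = (qpolR F).map Complex.ofRealHom := by
    rw [qpolR, Polynomial.map_prod]
    exact Finset.prod_congr rfl fun p _ => by simp
  rw [hmap]
  ext m
  rw [pol_coeff, Polynomial.coeff_map]
  split
  · rfl
  · next hm =>
      rw [Polynomial.coeff_eq_zero_of_natDegree_lt (by rw [qpolR_natDegree]; omega)]
      simp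

lemma lin_qvec {n : ℕ} {d : Fin n → ℕ} {k : Fin n} {F : Finset (Pairs n d)}
    (h : F.card < d k) (u : ℂ) :
    lin u (qvec k F) = ∏ p ∈ F, (u - (tR p : ℂ)) := by
  rw [lin_eq_eval, pol_qvec h, Polynomial.eval_prod]
  exact Finset.prod_congr rfl fun p _ => by simp

/-- for `2 ≤ d₁ ≤ ⋯ ≤ dₙ` with `dₙ - 1 ≤ ∑_{i=1}^{n-1}(dᵢ - 1)`, there is
a real global section `f` of `E` whose zero set is finite with exactly `c(d)` points,
all of which are real. -/
theorem exists_real_section_all_real_zeros (n : ℕ) (hn : 2 ≤ n) (d : Fin n → ℕ)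
    (hd : ∀ i, 2 ≤ d i) (hmono : Monotone d)
    (hfmt : d ⟨n - 1, by omega⟩ - 1 ≤
      ∑ i ∈ Finset.univ.erase (⟨n - 1, by omega⟩ : Fin n), (d i - 1)) :
    ∃ f : Section n d, IsRealSection d f ∧ (zeroSet d f).Finite ∧
      ((zeroSet d f).ncard : ℤ) = cCoeff d ∧
      ∀ P ∈ zeroSet d f, IsRealPoint d P := by
  classical
  have hd1 : ∀ k, 0 < d k := fun k => by have := hd k; omega
  set A : Finset (Pairs n d → Fin n) :=
    ((Fintype.piFinset (fun p : Pairs n d => Finset.univ.erase p.1)).filter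
      (fun φ => ∀ k, (Finset.univ.filter (fun p => φ p = k)).card = d k - 1)) with hA
  have hfibcard : ∀ φ ∈ A, ∀ k : Fin n,
      (Finset.univ.filter (fun p => φ p = k)).card = d k - 1 :=
    fun φ hφ => (Finset.mem_filter.1 hφ).2
  have hfiblt : ∀ φ ∈ A, ∀ k : Fin n,
      (Finset.univ.filter (fun p => φ p = k)).card < d k := by
    intro φ hφ k; rw [hfibcard φ hφ k]; have := hd k; omega
  have hone : ∀ k : Fin n, (fun _ => (1 : ℂ) : Fin (d k) → ℂ) ≠ 0 := by
    intro k h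
    have := congrFun h ⟨0, hd1 k⟩
    simp at this
  set Ψ : (Pairs n d → Fin n) → (∀ k : Fin n, Projectivization ℂ (Fin (d k) → ℂ)) :=
    fun φ k => if h : (Finset.univ.filter (fun p => φ p = k)).card < d k
      then Projectivization.mk ℂ (qvec k (Finset.univ.filter (fun p => φ p = k)))
        (qvec_ne_zero h)
      else Projectivization.mk ℂ (fun _ => 1) (hone k) with hΨ
  have hΨA : ∀ (φ : Pairs n d → Fin n) (hφ : φ ∈ A) (k : Fin n), Ψ φ k = Projectivization.mk ℂ
      (qvec k (Finset.univ.filter (fun p => φ p = k))) (qvec_ne_zero (hfiblt φ hφ k)) := by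
    intro φ hφ k
    rw [hΨ]
    exact dif_pos (hfiblt φ hφ k)
  -- (1) each Ψ φ is in the zero set
  have hmem : ∀ φ ∈ A, Ψ φ ∈ zeroSet d (Fsec n d) := by
    intro φ hφ
    refine ⟨fun k => qvec k (Finset.univ.filter (fun p => φ p = k)),
      fun k => qvec_ne_zero (hfiblt φ hφ k), fun k => hΨA φ hφ k, ?_⟩
    intro i j
    rw [eval_Fsec]
    have hne : φ ⟨i, j⟩ ≠ i := by
      have := (Finset.mem_filter.1 hφ).1
      rw [Fintype.mem_piFinset] at this
      exact Finset.ne_of_mem_erase (this ⟨i, j⟩)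
    apply Finset.prod_eq_zero (Finset.mem_univ (⟨φ ⟨i, j⟩, hne⟩ : {m : Fin n // m ≠ i}))
    rw [lin_qvec (hfiblt φ hφ _)]
    apply Finset.prod_eq_zero (i := (⟨i, j⟩ : Pairs n d))
    · simp
    · simp
  -- injectivity of Ψ on A
  have hinj : Set.InjOn Ψ ↑A := by
    intro φ hφ ψ hψ h
    have hφA : φ ∈ A := hφ
    have hψA : ψ ∈ A := hψ
    have hfib : ∀ k : Fin n, (Finset.univ.filter (fun p => φ p = k))
        = (Finset.univ.filter (fun p => ψ p = k)) := by
      intro k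
      have hk := congrFun h k
      rw [hΨA φ hφA k, hΨA ψ hψA k, Projectivization.mk_eq_mk_iff'] at hk
      obtain ⟨a, ha⟩ := hk
      have ha0 : a ≠ 0 := by
        intro h0
        rw [h0, zero_smul] at ha
        exact qvec_ne_zero (hfiblt φ hφA k) ha.symm
      apply Finset.eq_of_subset_of_card_le
      · intro p hp
        have hz : lin ((tR p : ℂ)) (qvec k (Finset.univ.filter (fun q => φ q = k))) = 0 := by
          rw [lin_qvec (hfiblt φ hφA k)]
          exact Finset.prod_eq_zero hp (sub_self _)
        rw [← ha, lin_smul] at hz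
        rcases mul_eq_zero.1 hz with h0 | h0
        · exact absurd h0 ha0
        · rw [lin_qvec (hfiblt ψ hψA k)] at h0
          obtain ⟨q, hq, hq0⟩ := Finset.prod_eq_zero_iff.1 h0
          have : tR p = tR q := by
            have := sub_eq_zero.1 hq0
            exact_mod_cast this
          rwa [tR_inj this]
      · rw [hfibcard φ hφA k, hfibcard ψ hψA k]
    funext p
    have hp : p ∈ Finset.univ.filter (fun q => φ q = φ p) := by simp
    rw [hfib (φ p)] at hp
    exact ((Finset.mem_filter.1 hp).2).symm
  -- surjectivity: every zero is of the form Ψ φ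
  have hsurj : zeroSet d (Fsec n d) ⊆ Ψ '' ↑A := by
    rintro P ⟨π, hπ, hPk, hz⟩
    set V : Fin n → Finset (Pairs n d) :=
      fun k => Finset.univ.filter (fun p => p.1 ≠ k ∧ lin ((tR p : ℂ)) (π k) = 0) with hV
    have hinjt : Set.InjOn (fun p : Pairs n d => ((tR p : ℝ) : ℂ)) ↑(Finset.univ : Finset (Pairs n d)) := by
      intro p _ q _ h
      have h' : ((tR p : ℝ) : ℂ) = ((tR q : ℝ) : ℂ) := h
      exact tR_inj (by exact_mod_cast h')
    have hVcard : ∀ k, (V k).card ≤ d k - 1 := by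
      intro k
      have hcard : ((V k).image (fun p => ((tR p : ℝ) : ℂ))).card = (V k).card :=
        Finset.card_image_of_injOn (hinjt.mono (by simp))
      rw [← hcard]
      apply card_vanish_le (hπ k)
      intro u hu
      obtain ⟨p, hp, rfl⟩ := Finset.mem_image.1 hu
      exact ((Finset.mem_filter.1 hp).2).2
    have hcover : ∀ p : Pairs n d, ∃ k, p ∈ V k := by
      intro p
      have h0 := hz p.1 p.2
      rw [eval_Fsec] at h0
      obtain ⟨m, _, hm⟩ := Finset.prod_eq_zero_iff.1 h0
      refine ⟨m.1, Finset.mem_filter.2 ⟨Finset.mem_univ _, m.2.symm, ?_⟩⟩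
      convert hm using 3
    choose φ hφV using hcover
    have hfible : ∀ k, (Finset.univ.filter (fun p => φ p = k)) ⊆ V k := by
      intro k p hp
      have := hφV p
      rwa [(Finset.mem_filter.1 hp).2] at this
    have hsum1 : ∑ k : Fin n, (Finset.univ.filter (fun p => φ p = k)).card
        = Fintype.card (Pairs n d) := by
      rw [← Finset.card_univ]
      exact (Finset.card_eq_sum_card_fiberwise (fun p _ => Finset.mem_univ (φ p))).symm
    have hsum2 : Fintype.card (Pairs n d) = ∑ k : Fin n, (d k - 1) := by
      simp [Fintype.card_sigma]
    have heq : ∀ k, (Finset.univ.filter (fun p => φ p = k)).card = d k - 1 := by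
      by_contra hne
      push_neg at hne
      obtain ⟨k0, hk0⟩ := hne
      have hle : ∀ k : Fin n, (Finset.univ.filter (fun p => φ p = k)).card ≤ d k - 1 :=
        fun k => le_trans (Finset.card_le_card (hfible k)) (hVcard k)
      have : ∑ k : Fin n, (Finset.univ.filter (fun p => φ p = k)).card
          < ∑ k : Fin n, (d k - 1) :=
        Finset.sum_lt_sum (fun k _ => hle k)
          ⟨k0, Finset.mem_univ _, lt_of_le_of_ne (hle k0) hk0⟩
      omega
    have hφA : φ ∈ A := by
      rw [hA, Finset.mem_filter]
      refine ⟨Fintype.mem_piFinset.2 fun p => ?_, heq⟩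
      refine Finset.mem_erase.2 ⟨?_, Finset.mem_univ _⟩
      exact (((Finset.mem_filter.1 (hφV p)).2).1).symm
    have hVeq : ∀ k, Finset.univ.filter (fun p => φ p = k) = V k := by
      intro k
      apply Finset.eq_of_subset_of_card_le (hfible k)
      rw [heq k]
      exact hVcard k
    refine ⟨φ, hφA, ?_⟩
    funext k
    rw [hΨA φ hφA k, hPk k, Projectivization.mk_eq_mk_iff']
    -- π k is proportional to qvec k (fiber)
    have hSc : ((V k).image (fun p => ((tR p : ℝ) : ℂ))).card = d k - 1 := by
      rw [Finset.card_image_of_injOn (hinjt.mono (by simp)), ← hVeq k, heq k]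
    obtain ⟨c, hc0, hcs⟩ := proportional (hd1 k) (hπ k)
      ((V k).image (fun p => ((tR p : ℝ) : ℂ))) hSc
      (fun u hu => by
        obtain ⟨p, hp, rfl⟩ := Finset.mem_image.1 hu
        exact ((Finset.mem_filter.1 hp).2).2)
    refine ⟨c⁻¹, ?_⟩
    funext s
    have hQ : (∏ w ∈ (V k).image (fun p => ((tR p : ℝ) : ℂ)),
        (Polynomial.X - Polynomial.C w)) = pol (qvec k (V k)) := by
      rw [pol_qvec (by rw [← hVeq k]; exact (heq k).trans_lt (by have := hd k; omega))]
      exact Finset.prod_image fun p hp q hq h => hinjt (by simp) (by simp) h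
    have h1 := hcs s
    rw [hQ, pol_coeff, dif_pos s.2, Fin.eta] at h1
    simp only [Pi.smul_apply, smul_eq_mul]
    rw [hVeq k, h1, ← mul_assoc, inv_mul_cancel₀ hc0, one_mul]
  -- assembling
  have hzs : zeroSet d (Fsec n d) = Ψ '' ↑A :=
    Set.Subset.antisymm hsurj (by rintro _ ⟨φ, hφ, rfl⟩; exact hmem φ hφ)
  refine ⟨Fsec n d, ?_, ?_, ?_, ?_⟩
  · intro i j c
    rw [Fsec]
    exact Complex.ofReal_im _
  · rw [hzs]
    exact (A.finite_toSet).image Ψ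
  · rw [hzs, Set.ncard_image_of_injOn hinj, Set.ncard_coe_finset, cCoeff_eq_card]
  · intro P hP
    rw [hzs] at hP
    obtain ⟨φ, hφ, rfl⟩ := hP
    refine ⟨fun k => qvec k (Finset.univ.filter (fun p => φ p = k)),
      fun k => qvec_ne_zero (hfiblt φ hφ k), fun k => hΨA φ hφ k, ?_⟩
    intro k s
    exact Complex.ofReal_im _
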